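/- Let p ∈ [1, ∞), k ≥ 1, and A ∈ ℝ^{n×m} with m ≥ k. Then the minimum, over all sets S of k column indices and all matrices V ∈ ℝ^{k×m}, of |A − A_S V|_p is at most (k+1) times the minimum of |A − B|_p over all matrices B ∈ ℝ^{n×m} of rank at most k. -/

import Mathlib

open Matrix

/-- The entrywise `ℓ_p` norm of a matrix `M ∈ ℝ^{n×m}`, for real `p`. -/
noncomputable def matLpNorm {n m : ℕ} (p : ℝ) (M : Matrix (Fin n) (Fin m) ℝ) : ℝ :=
  (∑ i, ∑ j, |M i j| ^ p) ^ (1 / p)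

namespace CSS


variable {n m : ℕ} {p : ℝ}

lemma matLpNorm_nonneg (M : Matrix (Fin n) (Fin m) ℝ) : 0 ≤ matLpNorm p M := by
  unfold matLpNorm; positivity

lemma matLpNorm_eq (M : Matrix (Fin n) (Fin m) ℝ) :
    matLpNorm p M = (∑ x : Fin n × Fin m, |M x.1 x.2| ^ p) ^ (1 / p) := by
  rw [matLpNorm, Fintype.sum_prod_type]

lemma matLpNorm_add_le (hp : 1 ≤ p) (M N : Matrix (Fin n) (Fin m) ℝ) :
    matLpNorm p (M + N) ≤ matLpNorm p M + matLpNorm p N := by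
  rw [matLpNorm_eq, matLpNorm_eq, matLpNorm_eq]
  simpa [Matrix.add_apply] using
    Real.Lp_add_le Finset.univ (fun x : Fin n × Fin m => M x.1 x.2)
      (fun x : Fin n × Fin m => N x.1 x.2) hp

lemma matLpNorm_neg (M : Matrix (Fin n) (Fin m) ℝ) : matLpNorm p (-M) = matLpNorm p M := by
  simp [matLpNorm, Matrix.neg_apply, abs_neg]

lemma matLpNorm_zero (hp0 : p ≠ 0) : matLpNorm p (0 : Matrix (Fin n) (Fin m) ℝ) = 0 := by
  simp [matLpNorm, Matrix.zero_apply, Real.zero_rpow hp0, Real.zero_rpow (inv_ne_zero hp0), one_div]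

lemma matLpNorm_sub_le (hp : 1 ≤ p) (M N : Matrix (Fin n) (Fin m) ℝ) :
    matLpNorm p (M - N) ≤ matLpNorm p M + matLpNorm p N := by
  rw [sub_eq_add_neg]
  simpa [matLpNorm_neg] using matLpNorm_add_le hp M (-N)

lemma matLpNorm_sum_le (hp : 1 ≤ p) {ι : Type*} (s : Finset ι)
    (f : ι → Matrix (Fin n) (Fin m) ℝ) :
    matLpNorm p (∑ i ∈ s, f i) ≤ ∑ i ∈ s, matLpNorm p (f i) := by
  classical
  induction s using Finset.induction with
  | empty => simp [matLpNorm_zero (by linarith : p ≠ 0)]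
  | insert _ _ hx ih =>
    rw [Finset.sum_insert hx, Finset.sum_insert hx]
    exact le_trans (matLpNorm_add_le hp _ _) (by linarith)

lemma matLpNorm_smul (hp0 : p ≠ 0) (c : ℝ) (M : Matrix (Fin n) (Fin m) ℝ) :
    matLpNorm p (c • M) = |c| * matLpNorm p M := by
  unfold matLpNorm
  have h1 : ∀ i j, |(c • M) i j| ^ p = |c| ^ p * |M i j| ^ p := by
    intro i j
    rw [Matrix.smul_apply, smul_eq_mul, abs_mul, Real.mul_rpow (abs_nonneg _) (abs_nonneg _)]
  simp only [h1, ← Finset.mul_sum]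
  rw [Real.mul_rpow (by positivity) (by positivity), ← Real.rpow_mul (abs_nonneg _),
    mul_one_div_cancel hp0, Real.rpow_one]

lemma matLpNorm_rankOne (hp0 : p ≠ 0) (u : Fin n → ℝ) (v : Fin m → ℝ) :
    matLpNorm p (Matrix.of fun i j => u i * v j)
      = (∑ i, |u i| ^ p) ^ (1 / p) * (∑ j, |v j| ^ p) ^ (1 / p) := by
  unfold matLpNorm
  have h1 : ∀ i j, |(Matrix.of fun i j => u i * v j) i j| ^ p = |u i| ^ p * |v j| ^ p := by
    intro i j
    rw [Matrix.of_apply, abs_mul, Real.mul_rpow (abs_nonneg _) (abs_nonneg _)]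
  simp only [h1, ← Finset.mul_sum, ← Finset.sum_mul]
  rw [Real.mul_rpow (by positivity) (by positivity)]

lemma rpow_one_div_rpow (hp0 : p ≠ 0) {x : ℝ} (hx : 0 ≤ x) : (x ^ (1 / p)) ^ p = x := by
  rw [← Real.rpow_mul hx, one_div_mul_cancel hp0, Real.rpow_one]

lemma matLpNorm_eq_cols (hp0 : p ≠ 0) (M : Matrix (Fin n) (Fin m) ℝ) :
    matLpNorm p M = (∑ j, ((∑ i, |M i j| ^ p) ^ (1 / p)) ^ p) ^ (1 / p) := by
  unfold matLpNorm
  rw [Finset.sum_comm]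
  congr 1
  exact Finset.sum_congr rfl fun j _ => (rpow_one_div_rpow hp0 (by positivity)).symm

lemma matLpNorm_mono (hp0 : 0 < p) {M N : Matrix (Fin n) (Fin m) ℝ}
    (h : ∀ i j, |M i j| ≤ |N i j|) : matLpNorm p M ≤ matLpNorm p N := by
  unfold matLpNorm
  apply Real.rpow_le_rpow (by positivity) _ (by positivity)
  apply Finset.sum_le_sum
  intro i _
  apply Finset.sum_le_sum
  intro j _
  exact Real.rpow_le_rpow (abs_nonneg _) (h i j) hp0.le

lemma exists_factorization {n m k : ℕ} (B : Matrix (Fin n) (Fin m) ℝ) (h : B.rank ≤ k) :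
    ∃ (U : Matrix (Fin n) (Fin k) ℝ) (W : Matrix (Fin k) (Fin m) ℝ), B = U * W := by
  classical
  set R := LinearMap.range B.mulVecLin with hR
  set r := Module.finrank ℝ R with hrdef
  have hrk : r ≤ k := h
  let b : Module.Basis (Fin r) ℝ R := Module.finBasis ℝ R
  have hcol : ∀ j, (fun i => B i j) ∈ R := by
    intro j
    refine ⟨Pi.single j 1, ?_⟩
    ext i
    simp [Matrix.mulVecLin_apply, Matrix.mulVec_single]
  let colv : Fin m → R := fun j => ⟨fun i => B i j, hcol j⟩
  refine ⟨Matrix.of (fun i l => if h : (l : ℕ) < r then ((b ⟨l, h⟩ : Fin n → ℝ) i) else 0),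
    Matrix.of (fun l j => if h : (l : ℕ) < r then b.repr (colv j) ⟨l, h⟩ else 0), ?_⟩
  ext i j
  rw [Matrix.mul_apply]
  have key : ∑ l : Fin r, (b l : Fin n → ℝ) i * b.repr (colv j) l = B i j := by
    have h2 := congrArg (Subtype.val) (b.sum_repr (colv j))
    have h3 := congrFun h2 i
    simp only [AddSubmonoidClass.coe_finset_sum, SetLike.val_smul, Finset.sum_apply,
      Pi.smul_apply, smul_eq_mul] at h3
    refine Eq.trans ?_ h3
    exact Finset.sum_congr rfl fun l _ => mul_comm _ _
  rw [← key]
  simp only [Matrix.of_apply]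
  have hrw : ∀ l : Fin k, (if h : (l : ℕ) < r then ((b ⟨l, h⟩ : Fin n → ℝ) i) else 0) *
        (if h : (l : ℕ) < r then (b.repr (colv j)) ⟨l, h⟩ else 0)
      = (if h : (l : ℕ) < r then ((b ⟨l, h⟩ : Fin n → ℝ) i) * b.repr (colv j) ⟨l, h⟩ else 0) :=
    fun l => by split <;> simp
  simp only [hrw]
  have hsub : (∑ l : Fin k, if h : (l : ℕ) < r then
        ((b ⟨l, h⟩ : Fin n → ℝ) i) * b.repr (colv j) ⟨l, h⟩ else 0)
      = ∑ l ∈ Finset.univ.map (Fin.castLEEmb hrk), (if h : (l : ℕ) < r then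
        ((b ⟨l, h⟩ : Fin n → ℝ) i) * b.repr (colv j) ⟨l, h⟩ else 0) := by
    refine (Finset.sum_subset (Finset.subset_univ _) ?_).symm
    intro x _ hx
    have hge : ¬ (x : ℕ) < r := fun hlt =>
      hx (Finset.mem_map.mpr ⟨⟨(x : ℕ), hlt⟩, Finset.mem_univ _, by ext; simp⟩)
    rw [dif_neg hge]
  rw [hsub, Finset.sum_map]
  refine Finset.sum_congr rfl fun l _ => ?_
  have hlt : ((Fin.castLEEmb hrk l : Fin k) : ℕ) < r := by simpa using l.2
  rw [dif_pos hlt]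
  congr 1

lemma exists_eta {k : ℕ} (W₀ : Matrix (Fin k) (Fin k) ℝ) {η₀ : ℝ} (hη₀ : 0 < η₀) :
    ∃ η : ℝ, 0 < η ∧ η < η₀ ∧ (W₀ + η • 1).det ≠ 0 := by
  classical
  set q := (-W₀).charpoly with hq
  have hqne : q ≠ 0 := (Matrix.charpoly_monic _).ne_zero
  have hroots : {x : ℝ | q.IsRoot x}.Finite := Polynomial.finite_setOf_isRoot hqne
  obtain ⟨η, hη⟩ := ((Set.Ioo_infinite hη₀).diff hroots).nonempty
  refine ⟨η, hη.1.1, hη.1.2, ?_⟩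
  have heval : q.eval η = (W₀ + η • 1).det := by
    rw [hq, Matrix.charpoly, ← Polynomial.coe_evalRingHom, RingHom.map_det]
    congr 1
    ext i j
    by_cases hij : i = j
    · subst hij
      simp [Matrix.charmatrix_apply_eq, Matrix.smul_apply, Matrix.one_apply, add_comm]
    · simp [Matrix.charmatrix_apply_ne _ _ _ hij, Matrix.one_apply, hij]
  intro hdet
  exact hη.2 (by simpa [Polynomial.IsRoot, heval] using hdet)

lemma exists_good_subset {k m : ℕ} (Y : Matrix (Fin k) (Fin m) ℝ)
    (S₁ : Fin k → Fin m) (hS₁ : Function.Injective S₁)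
    (hd1 : (Y.submatrix id S₁).det ≠ 0) :
    ∃ S : Fin k → Fin m, Function.Injective S ∧ ∃ C : Matrix (Fin k) (Fin m) ℝ,
      (∀ l j, |C l j| ≤ 1) ∧ Y.submatrix id S * C = Y := by
  classical
  have : Nonempty {S : Fin k → Fin m // Function.Injective S} := ⟨⟨S₁, hS₁⟩⟩
  obtain ⟨Smax, hmax⟩ := Finite.exists_max
    (fun S : {S : Fin k → Fin m // Function.Injective S} => |(Y.submatrix id S.val).det|)
  set Ysub := Y.submatrix id Smax.val with hYsub
  set d := Ysub.det with hdd
  have hd0 : d ≠ 0 := by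
    intro h0
    have h2 : |(Y.submatrix id S₁).det| ≤ |d| := hmax ⟨S₁, hS₁⟩
    rw [h0, abs_zero] at h2
    exact hd1 (abs_eq_zero.mp (le_antisymm h2 (abs_nonneg _)))
  have hdu : IsUnit d := isUnit_iff_ne_zero.mpr hd0
  have hYC : Ysub * (Ysub⁻¹ * Y) = Y := by
    rw [← Matrix.mul_assoc, Matrix.mul_nonsing_inv _ hdu, Matrix.one_mul]
  refine ⟨Smax.val, Smax.prop, Ysub⁻¹ * Y, ?_, by rw [← hYsub]; exact hYC⟩
  intro l j
  set bcol : Fin k → ℝ := fun i => Y i j with hbcol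
  set c : Fin k → ℝ := fun l' => (Ysub⁻¹ * Y) l' j with hc
  have hvec : Ysub *ᵥ c = bcol := by
    ext i
    show ∑ l', Ysub i l' * (Ysub⁻¹ * Y) l' j = Y i j
    rw [← Matrix.mul_apply, hYC]
  have hcr : cramer Ysub bcol = d • c := by
    have h4 : Ysub⁻¹ *ᵥ bcol = c := by
      rw [← hvec, Matrix.mulVec_mulVec, Matrix.nonsing_inv_mul _ hdu, Matrix.one_mulVec]
    rw [← Matrix.det_smul_inv_mulVec_eq_cramer _ _ hdu, h4, ← hdd]
  have hdet : d * c l = (Ysub.updateCol l bcol).det := by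
    have := congrFun hcr l
    rw [Matrix.cramer_apply] at this
    simpa using this.symm
  have hupd : Ysub.updateCol l bcol = Y.submatrix id (Function.update Smax.val l j) := by
    ext i l'
    by_cases h : l' = l <;>
      simp [Matrix.updateCol_apply, Function.update_apply, h, hYsub, hbcol]
  show |c l| ≤ 1
  by_cases hcase : ∃ l', l' ≠ l ∧ Smax.val l' = j
  · obtain ⟨l', hl', hSl'⟩ := hcase
    have hz : (Ysub.updateCol l bcol).det = 0 := by
      apply Matrix.det_zero_of_column_eq hl'
      intro i
      by_cases h' : l' = l
      · exact absurd h' hl'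
      · simp [Matrix.updateCol_apply, h', hYsub, hSl', hbcol]
    rw [hz] at hdet
    have : c l = 0 := by
      rcases mul_eq_zero.mp hdet with h | h
      · exact absurd h hd0
      · exact h
    rw [this, abs_zero]; exact zero_le_one
  · push_neg at hcase
    have hinj : Function.Injective (Function.update Smax.val l j) := by
      intro a b hab
      rcases eq_or_ne a l with ha | ha <;> rcases eq_or_ne b l with hb | hb
      · rw [ha, hb]
      · simp only [Function.update_apply, if_pos ha, if_neg hb] at hab
        exact absurd hab.symm (hcase b hb)
      · simp only [Function.update_apply, if_pos hb, if_neg ha] at hab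
        exact absurd hab (hcase a ha)
      · simp only [Function.update_apply, if_neg ha, if_neg hb] at hab
        exact Smax.prop hab
    have hle : |(Ysub.updateCol l bcol).det| ≤ |d| := by
      rw [hupd]
      exact hmax ⟨Function.update Smax.val l j, hinj⟩
    rw [← hdet, abs_mul] at hle
    have hdpos : 0 < |d| := abs_pos.mpr hd0
    nlinarith [abs_nonneg (c l)]

variable {n m k : ℕ} {p : ℝ}

set_option maxHeartbeats 1200000 in
lemma key (hp : 1 ≤ p) (hk : 1 ≤ k) (hm : k ≤ m)
    (A B : Matrix (Fin n) (Fin m) ℝ) (hB : B.rank ≤ k) {ε : ℝ} (hε : 0 < ε) :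
    ∃ S : Fin k → Fin m, Function.Injective S ∧ ∃ V : Matrix (Fin k) (Fin m) ℝ,
      matLpNorm p (A - A.submatrix id S * V) ≤ ((k : ℝ) + 1) * matLpNorm p (A - B) + ε := by
  classical
  have hp0 : p ≠ 0 := by linarith
  have hppos : 0 < p := by linarith
  obtain ⟨U, W, hUW⟩ := exists_factorization B hB
  set G : Matrix (Fin k) (Fin m) ℝ :=
    Matrix.of (fun i j => if (j : ℕ) = (i : ℕ) then (1 : ℝ) else 0) with hG
  set cUG : ℝ := matLpNorm p (U * G) with hcUG
  have hcUG0 : 0 ≤ cUG := matLpNorm_nonneg _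
  have hη₀ : 0 < ε / (2 * ((k : ℝ) + 1) * (cUG + 1)) := by positivity
  obtain ⟨η, hη1, hη2, hηdet⟩ := exists_eta (W.submatrix id (Fin.castLE hm)) hη₀
  set W' : Matrix (Fin k) (Fin m) ℝ := W + η • G with hW'
  set B' : Matrix (Fin n) (Fin m) ℝ := U * W' with hB'
  set δ : Matrix (Fin n) (Fin m) ℝ := A - B' with hδ
  set ε₀ : ℝ := ε / (2 * ((k : ℝ) * m + 1)) with hε₀def
  have hε₀ : 0 < ε₀ := by positivity
  set t : Fin m → ℝ := fun j => (∑ i, |δ i j| ^ p) ^ (1 / p) + ε₀ with ht_def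
  have ht : ∀ j, 0 < t j := fun j => add_pos_of_nonneg_of_pos (by positivity) hε₀
  set Y : Matrix (Fin k) (Fin m) ℝ := Matrix.of (fun i j => W' i j / t j) with hY
  set T : ℝ := (∑ j, t j ^ p) ^ (1 / p) with hT
  have hTeq : T = (∑ j, ((∑ i, |δ i j| ^ p) ^ (1 / p) + ε₀) ^ p) ^ (1 / p) := rfl
  have ht_def' : ∀ j, t j = (∑ i, |δ i j| ^ p) ^ (1 / p) + ε₀ := fun j => rfl
  clear_value G cUG W' B' δ ε₀ t T Y
  have htne : ∀ j, t j ≠ 0 := fun j => ne_of_gt (ht j)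
  have hT0 : 0 ≤ T := by
    rw [hT]
    exact Real.rpow_nonneg (Finset.sum_nonneg fun j _ => Real.rpow_nonneg (ht j).le p) _
  -- determinant of canonical submatrix nonzero
  have hdet' : (Y.submatrix id (Fin.castLE hm)).det ≠ 0 := by
    have h1 : Y.submatrix id (Fin.castLE hm) =
        Matrix.of (fun i l => (1 / t (Fin.castLE hm l)) *
          ((W.submatrix id (Fin.castLE hm) + η • (1 : Matrix (Fin k) (Fin k) ℝ)) i l)) := by
      ext i l
      simp only [Matrix.submatrix_apply, Matrix.of_apply, id_eq, Matrix.add_apply,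
        Matrix.smul_apply, Matrix.one_apply, smul_eq_mul, hY, hW', hG]
      have hcond : ((Fin.castLE hm l : Fin m) : ℕ) = (i : ℕ) ↔ i = l := by
        rw [Fin.coe_castLE]
        constructor
        · intro h; exact Fin.ext h.symm
        · intro h; rw [h]
      by_cases h : i = l
      · rw [if_pos (hcond.mpr h), if_pos h]; rw [div_eq_mul_inv, one_div]; ring
      · rw [if_neg (fun hc => h (hcond.mp hc)), if_neg h]
        rw [div_eq_mul_inv, one_div]; ring
    rw [h1, Matrix.det_mul_row]
    exact mul_ne_zero (Finset.prod_ne_zero_iff.mpr fun l _ =>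
      one_div_ne_zero (htne _)) hηdet
  obtain ⟨S, hS, C, hC, hYC⟩ := exists_good_subset Y (Fin.castLE hm)
    (Fin.castLE_injective hm) hdet'
  set V : Matrix (Fin k) (Fin m) ℝ := Matrix.of (fun l j => C l j * (t j / t (S l))) with hV
  clear_value V
  refine ⟨S, hS, V, ?_⟩
  have hWV : W'.submatrix id S * V = W' := by
    ext i j
    rw [Matrix.mul_apply]
    have hYCij : ∑ l, Y i (S l) * C l j = Y i j := by
      have h := congrFun (congrFun hYC i) j
      rw [← h, Matrix.mul_apply]
      rfl
    have expand : ∀ l, (W'.submatrix id S) i l * V l j = t j * (Y i (S l) * C l j) := by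
      intro l
      simp only [Matrix.submatrix_apply, Matrix.of_apply, id_eq, hV, hY]
      field_simp
    rw [Finset.sum_congr rfl fun l _ => expand l, ← Finset.mul_sum, hYCij]
    simp only [hY, Matrix.of_apply]
    rw [mul_comm]
    exact div_mul_cancel₀ _ (htne j)
  have hBV : B'.submatrix id S * V = B' := by
    have hsub : B'.submatrix id S = U * (W'.submatrix id S) := by
      ext i l
      simp [Matrix.submatrix_apply, hB', Matrix.mul_apply]
    rw [hsub, Matrix.mul_assoc, hWV, ← hB']
  have hsubadd : A.submatrix id S = B'.submatrix id S + δ.submatrix id S := by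
    ext i l
    simp [hδ, Matrix.submatrix_apply, Matrix.sub_apply]
  have hAid : A - A.submatrix id S * V = δ - δ.submatrix id S * V := by
    rw [hsubadd, Matrix.add_mul, hBV, hδ]
    abel
  have hdecomp : δ.submatrix id S * V =
      ∑ l : Fin k, Matrix.of (fun i j => δ i (S l) * V l j) := by
    ext i j
    rw [Matrix.mul_apply, Matrix.sum_apply]
    rfl
  have hbound1 : matLpNorm p (A - A.submatrix id S * V)
      ≤ matLpNorm p δ + ∑ l : Fin k, matLpNorm p (Matrix.of (fun i j => δ i (S l) * V l j)) := by
    rw [hAid]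
    refine le_trans (matLpNorm_sub_le hp _ _) (add_le_add_right ?_ _)
    rw [hdecomp]
    exact matLpNorm_sum_le hp Finset.univ _
  have hrankle : ∀ l : Fin k, matLpNorm p (Matrix.of (fun i j => δ i (S l) * V l j)) ≤ T := by
    intro l
    rw [matLpNorm_rankOne hp0]
    have h1 : (∑ i, |δ i (S l)| ^ p) ^ (1 / p) ≤ t (S l) := by
      rw [ht_def' (S l)]
      exact le_add_of_nonneg_right hε₀.le
    have h2 : (∑ j, |V l j| ^ p) ^ (1 / p) ≤ T / t (S l) := by
      have hterm : ∀ j, |V l j| ^ p ≤ t j ^ p / t (S l) ^ p := by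
        intro j
        have hVle : |V l j| ≤ t j / t (S l) := by
          simp only [hV, Matrix.of_apply, abs_mul]
          have htq : |t j / t (S l)| = t j / t (S l) := abs_of_pos (div_pos (ht j) (ht (S l)))
          rw [htq]
          calc |C l j| * (t j / t (S l)) ≤ 1 * (t j / t (S l)) :=
                mul_le_mul_of_nonneg_right (hC l j) (div_pos (ht j) (ht (S l))).le
            _ = t j / t (S l) := one_mul _
        calc |V l j| ^ p ≤ (t j / t (S l)) ^ p :=
              Real.rpow_le_rpow (abs_nonneg _) hVle hppos.le
          _ = t j ^ p / t (S l) ^ p := Real.div_rpow (ht j).le (ht (S l)).le p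
      calc (∑ j, |V l j| ^ p) ^ (1 / p)
          ≤ (∑ j, t j ^ p / t (S l) ^ p) ^ (1 / p) :=
            Real.rpow_le_rpow (by positivity) (Finset.sum_le_sum fun j _ => hterm j)
              (by positivity)
        _ = ((∑ j, t j ^ p) / t (S l) ^ p) ^ (1 / p) := by rw [← Finset.sum_div]
        _ = T / t (S l) := by
            rw [Real.div_rpow (Finset.sum_nonneg fun j _ => Real.rpow_nonneg (ht j).le p)
              (Real.rpow_nonneg (ht (S l)).le p) (1 / p), hT]
            congr 1
            rw [← Real.rpow_mul (ht (S l)).le, mul_one_div_cancel hp0, Real.rpow_one]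
    calc (∑ i, |δ i (S l)| ^ p) ^ (1 / p) * (∑ j, |V l j| ^ p) ^ (1 / p)
        ≤ t (S l) * (T / t (S l)) :=
          mul_le_mul h1 h2
            (Real.rpow_nonneg (Finset.sum_nonneg fun j _ =>
              Real.rpow_nonneg (abs_nonneg _) _) _) (ht (S l)).le
      _ = T := by rw [mul_comm]; exact div_mul_cancel₀ T (htne (S l))
  have hTle : T ≤ matLpNorm p δ + (m : ℝ) * ε₀ := by
    have hmink : (∑ j, ((∑ i, |δ i j| ^ p) ^ (1 / p) + ε₀) ^ p) ^ (1 / p)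
        ≤ (∑ j, ((∑ i, |δ i j| ^ p) ^ (1 / p)) ^ p) ^ (1 / p)
          + (∑ _j : Fin m, ε₀ ^ p) ^ (1 / p) := by
      refine Real.Lp_add_le_of_nonneg Finset.univ hp (fun j _ => ?_) (fun j _ => hε₀.le)
      exact Real.rpow_nonneg (Finset.sum_nonneg fun i _ => Real.rpow_nonneg (abs_nonneg _) _) _
    rw [hTeq]
    refine le_trans hmink (add_le_add ?_ ?_)
    · rw [← matLpNorm_eq_cols hp0 δ]
    · have hconst : (∑ _j : Fin m, ε₀ ^ p) = (m : ℝ) * ε₀ ^ p := by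
        rw [Finset.sum_const, Finset.card_univ, Fintype.card_fin, nsmul_eq_mul]
      rw [hconst, Real.mul_rpow (Nat.cast_nonneg m) (Real.rpow_nonneg hε₀.le p),
        ← Real.rpow_mul hε₀.le, mul_one_div_cancel hp0, Real.rpow_one]
      have hm1 : (1 : ℝ) ≤ (m : ℝ) := by
        have : 1 ≤ m := le_trans hk hm
        exact_mod_cast this
      have : (m : ℝ) ^ (1 / p) ≤ (m : ℝ) := by
        calc (m : ℝ) ^ (1 / p) ≤ (m : ℝ) ^ (1 : ℝ) :=
              Real.rpow_le_rpow_of_exponent_le hm1 (by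
                rw [div_le_one hppos]; linarith)
          _ = (m : ℝ) := Real.rpow_one _
      exact mul_le_mul_of_nonneg_right this hε₀.le
  have hδle : matLpNorm p δ ≤ matLpNorm p (A - B) + η * cUG := by
    have hδeq : δ = (A - B) - η • (U * G) := by
      rw [hδ, hB', hW', Matrix.mul_add, Matrix.mul_smul, hUW]
      abel
    rw [hδeq]
    refine le_trans (matLpNorm_sub_le hp _ _) ?_
    rw [matLpNorm_smul hp0, abs_of_pos hη1, ← hcUG]
  have hD0 : 0 ≤ matLpNorm p (A - B) := matLpNorm_nonneg _
  have hδ0 : 0 ≤ matLpNorm p δ := matLpNorm_nonneg _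
  have hsumT : ∑ l : Fin k, matLpNorm p (Matrix.of (fun i j => δ i (S l) * V l j))
      ≤ (k : ℝ) * T := by
    calc ∑ l : Fin k, matLpNorm p (Matrix.of (fun i j => δ i (S l) * V l j))
        ≤ ∑ _l : Fin k, T := Finset.sum_le_sum fun l _ => hrankle l
      _ = (k : ℝ) * T := by
          rw [Finset.sum_const, Finset.card_univ, Fintype.card_fin, nsmul_eq_mul]
  have e1 : ((k : ℝ) + 1) * (η * cUG) ≤ ε / 2 := by
    have h1 : η * cUG ≤ (ε / (2 * ((k : ℝ) + 1) * (cUG + 1))) * (cUG + 1) :=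
      mul_le_mul hη2.le (by linarith) hcUG0 hη₀.le
    have h2 : (ε / (2 * ((k : ℝ) + 1) * (cUG + 1))) * (cUG + 1) = ε / (2 * ((k : ℝ) + 1)) := by
      field_simp
    have h3 : ((k : ℝ) + 1) * (η * cUG) ≤ ((k : ℝ) + 1) * (ε / (2 * ((k : ℝ) + 1))) := by
      apply mul_le_mul_of_nonneg_left _ (by positivity)
      rw [← h2]; exact h1
    refine le_trans h3 (le_of_eq ?_)
    field_simp
  have e2 : (k : ℝ) * ((m : ℝ) * ε₀) ≤ ε / 2 := by
    have heq : (k : ℝ) * ((m : ℝ) * ε₀) = ε * ((k : ℝ) * m) / (2 * ((k : ℝ) * m + 1)) := by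
      rw [hε₀def]; ring
    rw [heq, div_le_iff₀ (by positivity)]
    nlinarith [hε.le, mul_nonneg (Nat.cast_nonneg' k : (0:ℝ) ≤ k) (Nat.cast_nonneg' m : (0:ℝ) ≤ m)]
  calc matLpNorm p (A - A.submatrix id S * V)
      ≤ matLpNorm p δ + ∑ l : Fin k, matLpNorm p (Matrix.of (fun i j => δ i (S l) * V l j)) :=
        hbound1
    _ ≤ matLpNorm p δ + (k : ℝ) * T := by linarith
    _ ≤ (matLpNorm p (A - B) + η * cUG) +
        (k : ℝ) * ((matLpNorm p (A - B) + η * cUG) + (m : ℝ) * ε₀) := by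
        have hTle2 : T ≤ (matLpNorm p (A - B) + η * cUG) + (m : ℝ) * ε₀ := by linarith
        have hk0 : (0 : ℝ) ≤ (k : ℝ) := Nat.cast_nonneg' k
        nlinarith [mul_le_mul_of_nonneg_left hTle2 hk0]
    _ = ((k : ℝ) + 1) * matLpNorm p (A - B) + (((k : ℝ) + 1) * (η * cUG)
        + (k : ℝ) * ((m : ℝ) * ε₀)) := by ring
    _ ≤ ((k : ℝ) + 1) * matLpNorm p (A - B) + ε := by linarith

end CSS

/-- For `p ∈ [1, ∞)`, `k ≥ 1` and `A ∈ ℝ^{n×m}` with `m ≥ k`, the minimum of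
`|A - A_S V|_p` over sets `S` of `k` column indices and matrices `V ∈ ℝ^{k×m}` is at most
`(k+1)` times the minimum of `|A - B|_p` over matrices `B` of rank at most `k`. -/
theorem column_subset_selection_lp_approx
    {n m k : ℕ} (p : ℝ) (hp : 1 ≤ p) (hk : 1 ≤ k) (hm : k ≤ m)
    (A : Matrix (Fin n) (Fin m) ℝ) :
    sInf {c : ℝ | ∃ S : Fin k → Fin m, Function.Injective S ∧
        ∃ V : Matrix (Fin k) (Fin m) ℝ, c = matLpNorm p (A - A.submatrix id S * V)}
      ≤ ((k : ℝ) + 1) *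
        sInf {c : ℝ | ∃ B : Matrix (Fin n) (Fin m) ℝ, B.rank ≤ k ∧ c = matLpNorm p (A - B)} := by
  classical
  set L := {c : ℝ | ∃ S : Fin k → Fin m, Function.Injective S ∧
      ∃ V : Matrix (Fin k) (Fin m) ℝ, c = matLpNorm p (A - A.submatrix id S * V)} with hL
  set R := {c : ℝ | ∃ B : Matrix (Fin n) (Fin m) ℝ, B.rank ≤ k ∧ c = matLpNorm p (A - B)} with hR
  have hRne : R.Nonempty :=
    ⟨matLpNorm p (A - 0), 0, by rw [Matrix.rank_zero]; exact Nat.zero_le k, rfl⟩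
  have hLbdd : BddBelow L := by
    refine ⟨0, fun c hc => ?_⟩
    obtain ⟨S, hS, V, rfl⟩ := hc
    exact CSS.matLpNorm_nonneg _
  refine le_of_forall_pos_le_add fun ε hε => ?_
  obtain ⟨c, hcR, hclt⟩ := Real.lt_sInf_add_pos hRne
    (show (0:ℝ) < ε / (2 * ((k : ℝ) + 1)) by positivity)
  obtain ⟨B, hBrank, rfl⟩ := hcR
  obtain ⟨S, hS, V, hV⟩ := CSS.key hp hk hm A B hBrank (show (0:ℝ) < ε / 2 by positivity)
  have h1 : sInf L ≤ matLpNorm p (A - A.submatrix id S * V) :=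
    csInf_le hLbdd ⟨S, hS, V, rfl⟩
  have h2 : ((k : ℝ) + 1) * matLpNorm p (A - B)
      ≤ ((k : ℝ) + 1) * (sInf R + ε / (2 * ((k : ℝ) + 1))) :=
    mul_le_mul_of_nonneg_left hclt.le (by positivity)
  have h3 : ((k : ℝ) + 1) * (sInf R + ε / (2 * ((k : ℝ) + 1)))
      = ((k : ℝ) + 1) * sInf R + ε / 2 := by
    field_simp
  linarith
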